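/- Let m ≥ 2 and 0 < α_m < ⋯ < α_2 < α_1 < 1. Set k(t) = ∑_{j=1}^m g_{1−α_j}(t) and l(t) = t^{α_1−1} E_{(α_1−α_2,…,α_1−α_m),α_1}(−t^{α_1−α_2},…,−t^{α_1−α_m}) for t > 0. Then (k ∗ l)(t) = 1 for all t > 0; that is, (k,l) form a Sonine pair associated with the multi-term time-fractional diffusion equation. -/

import Mathlib

open MeasureTheory Set intervalIntegral

/-- Laplace convolution on `(0, ∞)`: `(f ∗ g)(t) = ∫_0^t f(t−τ) g(τ) dτ`. -/
noncomputable def lconv (f g : ℝ → ℝ) (t : ℝ) : ℝ := ∫ τ in (0:ℝ)..t, f (t - τ) * g τ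

/-- `g μ t = t^(μ-1)/Γ(μ)`. -/
noncomputable def g (μ t : ℝ) : ℝ := t ^ (μ - 1) / Real.Gamma μ

/-- The multivariate Mittag-Leffler function
`E_{(a_1,…,a_n),β}(z_1,…,z_n) = ∑_{k=0}^∞ ∑_{l_1+⋯+l_n=k} (k!/(l_1!⋯l_n!)) ∏ z_j^{l_j} / Γ(β + ∑ a_j l_j)`. -/
noncomputable def mvMittagLeffler (n : ℕ) (a : Fin n → ℝ) (β : ℝ) (z : Fin n → ℝ) : ℝ :=
  ∑' k : ℕ, ∑ l ∈ Finset.Nat.antidiagonalTuple n k,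
    ((Nat.factorial k : ℝ) / ∏ j, (Nat.factorial (l j) : ℝ)) *
      (∏ j, z j ^ l j) / Real.Gamma (β + ∑ j, a j * l j)

lemma Gamma_ge {x : ℝ} (hx : 1 ≤ x) : Real.exp (-1) ≤ Real.Gamma x := by
  have hx0 : 0 < x := lt_of_lt_of_le one_pos hx
  rw [Real.Gamma_eq_integral hx0]
  have h1 : Real.exp (-1) = ∫ t in Ioi (1:ℝ), Real.exp (-t) := (integral_exp_neg_Ioi 1).symm
  rw [h1]
  have hint : IntegrableOn (fun t : ℝ => Real.exp (-t) * t ^ (x - 1)) (Ioi 0) := by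
    exact Real.GammaIntegral_convergent hx0
  have hint1 : IntegrableOn (fun t : ℝ => Real.exp (-t) * t ^ (x - 1)) (Ioi 1) :=
    hint.mono_set (fun t ht => mem_Ioi.mpr (lt_trans one_pos (mem_Ioi.mp ht)))
  have hexp1 : IntegrableOn (fun t : ℝ => Real.exp (-t)) (Ioi 1) := by
    simpa using exp_neg_integrableOn_Ioi 1 one_pos
  calc ∫ t in Ioi (1:ℝ), Real.exp (-t)
      ≤ ∫ t in Ioi (1:ℝ), Real.exp (-t) * t ^ (x - 1) := by
        refine setIntegral_mono_on hexp1 hint1 measurableSet_Ioi (fun t ht => ?_)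
        have ht1 : (1:ℝ) ≤ t := le_of_lt ht
        nth_rewrite 1 [← mul_one (Real.exp (-t))]
        gcongr
        exact Real.one_le_rpow ht1 (by linarith)
    _ ≤ ∫ t in Ioi (0:ℝ), Real.exp (-t) * t ^ (x - 1) := by
        refine setIntegral_mono_set hint ?_ ?_
        · filter_upwards [self_mem_ae_restrict measurableSet_Ioi] with t ht
          have ht0 : (0:ℝ) < t := ht
          positivity
        · exact HasSubset.Subset.eventuallyLE (fun t ht => mem_Ioi.mpr (lt_trans one_pos (mem_Ioi.mp ht)))

lemma Gamma_nat_lower (n : ℕ) {x : ℝ} (hx : 1 ≤ x) :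
    Real.exp (-1) * n.factorial ≤ Real.Gamma (x + n) := by
  induction n generalizing x with
  | zero => simpa using Gamma_ge hx
  | succ n ih =>
    have hx0 : (0:ℝ) < x + n := by positivity
    have : Real.Gamma (x + (n+1)) = (x + n) * Real.Gamma (x + n) := by
      rw [show x + ((n:ℝ)+1) = (x + n) + 1 by ring, Real.Gamma_add_one (ne_of_gt hx0)]
    rw [Nat.factorial_succ, show ((n+1:ℕ):ℝ) = (n:ℝ)+1 by push_cast; ring, this]
    push_cast
    have h1 : Real.exp (-1) * n.factorial ≤ Real.Gamma (x + n) := ih hx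
    have h2 : ((n:ℝ) + 1) ≤ x + n := by linarith
    calc Real.exp (-1) * ((↑n + 1) * ↑n.factorial)
        = ((n:ℝ)+1) * (Real.exp (-1) * n.factorial) := by ring
      _ ≤ ((n:ℝ)+1) * Real.Gamma (x + n) := by
          refine mul_le_mul_of_nonneg_left h1 (by positivity)
      _ ≤ (x + n) * Real.Gamma (x + n) := by
          refine mul_le_mul_of_nonneg_right h2 (Real.Gamma_pos_of_pos (by positivity)).le

lemma Gamma_floor_lower {x s : ℝ} (hx : 1 ≤ x) (hs : 0 ≤ s) :
    Real.exp (-1) * (Nat.floor s).factorial ≤ Real.Gamma (x + s) := by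
  have h1 : (Nat.floor s : ℝ) ≤ s := Nat.floor_le hs
  have : x + s = (x + (s - Nat.floor s)) + (Nat.floor s : ℝ) := by ring
  rw [this]
  exact Gamma_nat_lower (Nat.floor s) (by linarith)

lemma Wr_eq {n : ℕ} (l : Fin n → ℕ) :
    (((∑ j, l j).factorial : ℝ)) / (∏ j, ((l j).factorial : ℝ))
      = (Nat.multinomial Finset.univ l : ℝ) := by
  have h := Nat.multinomial_spec Finset.univ l
  have hP : (∏ j, ((l j).factorial : ℝ)) ≠ 0 := by
    refine Finset.prod_ne_zero_iff.mpr (fun j _ => ?_)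
    exact_mod_cast (Nat.factorial_pos _).ne'
  rw [div_eq_iff hP, mul_comm]
  exact_mod_cast congrArg (Nat.cast : ℕ → ℝ) h.symm

lemma multinomial_thm {n : ℕ} (k : ℕ) (x : Fin n → ℝ) :
    ∑ l ∈ Finset.Nat.antidiagonalTuple n k,
      (Nat.multinomial Finset.univ l : ℝ) * ∏ j, x j ^ l j = (∑ j, x j) ^ k := by
  rw [← Finset.piAntidiag_univ_fin_eq_antidiagonalTuple k n]
  exact (Finset.sum_pow_eq_sum_piAntidiag Finset.univ x k).symm

lemma mult_upd {n : ℕ} (l : Fin n → ℕ) (j : Fin n) :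
    (l j + 1) * Nat.multinomial Finset.univ (Function.update l j (l j + 1))
      = (∑ i, l i + 1) * Nat.multinomial Finset.univ l := by
  have h1 := Nat.multinomial_spec Finset.univ l
  have h2 := Nat.multinomial_spec Finset.univ (Function.update l j (l j + 1))
  have hsum : ∑ i, Function.update l j (l j + 1) i = ∑ i, l i + 1 := by
    rw [Finset.sum_update_of_mem (Finset.mem_univ j), ← Finset.erase_eq,
      ← Finset.add_sum_erase Finset.univ l (Finset.mem_univ j)]
    omega
  have hprod : ∏ i, (Function.update l j (l j + 1) i).factorial
      = (l j + 1) * ∏ i, (l i).factorial := by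
    have hfe : (fun i => (Function.update l j (l j + 1) i).factorial)
        = Function.update (fun i => (l i).factorial) j ((l j + 1).factorial) := by
      funext i
      exact Function.apply_update (fun _ x => Nat.factorial x) l j (l j + 1) i
    show ∏ i, (fun i => (Function.update l j (l j + 1) i).factorial) i = _
    rw [hfe, Finset.prod_update_of_mem (Finset.mem_univ j), ← Finset.erase_eq,
      ← Finset.mul_prod_erase Finset.univ (fun i => (l i).factorial) (Finset.mem_univ j),
      Nat.factorial_succ]
    ring
  rw [hsum, hprod] at h2
  have hP : 0 < ∏ i, (l i).factorial :=
    Finset.prod_pos (fun i _ => Nat.factorial_pos _)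
  refine Nat.eq_of_mul_eq_mul_left hP ?_
  calc (∏ i, (l i).factorial) * ((l j + 1) * Nat.multinomial Finset.univ (Function.update l j (l j + 1)))
      = ((l j + 1) * ∏ i, (l i).factorial) * Nat.multinomial Finset.univ (Function.update l j (l j + 1)) := by ring
    _ = (∑ i, l i + 1).factorial := h2
    _ = (∑ i, l i + 1) * (∑ i, l i).factorial := Nat.factorial_succ _
    _ = (∑ i, l i + 1) * ((∏ i, (l i).factorial) * Nat.multinomial Finset.univ l) := by rw [h1]
    _ = (∏ i, (l i).factorial) * ((∑ i, l i + 1) * Nat.multinomial Finset.univ l) := by ring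

lemma key_rec {n : ℕ} (k : ℕ) (F : (Fin n → ℕ) → ℝ) :
    ∑ j : Fin n, ∑ l ∈ Finset.Nat.antidiagonalTuple n k,
        (Nat.multinomial Finset.univ l : ℝ) * F (Function.update l j (l j + 1))
      = ∑ l' ∈ Finset.Nat.antidiagonalTuple n (k+1),
        (Nat.multinomial Finset.univ l' : ℝ) * F l' := by
  have hmem : ∀ {kk : ℕ} {l : Fin n → ℕ},
      l ∈ Finset.Nat.antidiagonalTuple n kk ↔ ∑ i, l i = kk := fun {kk l} =>
    Finset.Nat.mem_antidiagonalTuple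
  -- rewrite RHS with weight factors
  have rhs_eq : ∑ l' ∈ Finset.Nat.antidiagonalTuple n (k+1),
        (Nat.multinomial Finset.univ l' : ℝ) * F l'
      = ∑ j : Fin n, ∑ l' ∈ Finset.Nat.antidiagonalTuple n (k+1),
        ((l' j : ℝ) / (k+1)) * (Nat.multinomial Finset.univ l' : ℝ) * F l' := by
    rw [Finset.sum_comm]
    refine Finset.sum_congr rfl (fun l' hl' => ?_)
    rw [← Finset.sum_mul, ← Finset.sum_mul, ← Finset.sum_div]
    have : ∑ j, (l' j : ℝ) = (k + 1 : ℝ) := by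
      have := hmem.mp hl'
      exact_mod_cast congrArg (Nat.cast : ℕ → ℝ) this
    rw [this, div_self (by positivity), one_mul]
  rw [rhs_eq]
  refine Finset.sum_congr rfl (fun j _ => ?_)
  refine Finset.sum_of_injOn (fun l => Function.update l j (l j + 1)) ?_ ?_ ?_ ?_
  · intro l1 _ l2 _ h
    funext i
    by_cases hij : i = j
    · subst hij
      have := congrFun h i
      simpa using this
    · have := congrFun h i
      simpa [Function.update_of_ne hij] using this
  · intro l hl
    simp only [Finset.coe_sort_coe, Finset.mem_coe, hmem] at hl ⊢
    rw [Finset.sum_update_of_mem (Finset.mem_univ j), ← Finset.erase_eq]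
    rw [← Finset.add_sum_erase Finset.univ l (Finset.mem_univ j)] at hl
    omega
  · intro l' hl' hl'im
    have hj0 : l' j = 0 := by
      by_contra hj
      refine hl'im ?_
      refine ⟨Function.update l' j (l' j - 1), ?_, ?_⟩
      · simp only [Finset.mem_coe, hmem] at hl' ⊢
        rw [Finset.sum_update_of_mem (Finset.mem_univ j), ← Finset.erase_eq]
        rw [← Finset.add_sum_erase Finset.univ l' (Finset.mem_univ j)] at hl'
        omega
      · funext i
        by_cases hij : i = j
        · subst hij
          simp only [Function.update_self]
          omega
        · simp [Function.update_of_ne hij]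
    rw [hj0]
    simp
  · intro l hl
    have hls : ∑ i, l i = k := hmem.mp hl
    have hup : (Function.update l j (l j + 1)) j = l j + 1 := by simp
    rw [hup]
    have hm := mult_upd l j
    rw [hls] at hm
    have : ((l j : ℝ) + 1) / (k+1) * (Nat.multinomial Finset.univ (Function.update l j (l j + 1)) : ℝ)
        = (Nat.multinomial Finset.univ l : ℝ) := by
      have hmr : ((l j : ℝ) + 1) * (Nat.multinomial Finset.univ (Function.update l j (l j + 1)) : ℝ)
          = ((k : ℝ) + 1) * (Nat.multinomial Finset.univ l : ℝ) := by
        exact_mod_cast congrArg (Nat.cast : ℕ → ℝ) hm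
      rw [div_mul_eq_mul_div, hmr]
      field_simp
    push_cast
    rw [mul_assoc, ← this]
    ring

lemma summable_geo_div_floor (R : ℝ) (hR : 0 ≤ R) {δ : ℝ} (hδ : 0 < δ) :
    Summable (fun k : ℕ => R ^ k / (Nat.floor (δ * k)).factorial) := by
  set p : ℕ := ⌈1/δ⌉₊ + 1 with hp
  have hp1 : 1 ≤ p := Nat.le_add_left 1 _
  have hppos : (0:ℝ) < p := by positivity
  have hpδ : 1 ≤ δ * p := by
    have h1 : 1/δ ≤ p := le_trans (Nat.le_ceil _) (by exact_mod_cast Nat.le_succ _)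
    rw [div_le_iff₀ hδ] at h1
    linarith [mul_comm δ (p:ℝ)]
  set Q : ℝ := max R 1 with hQ
  have hQ1 : (1:ℝ) ≤ Q := le_max_right _ _
  have hQ0 : (0:ℝ) ≤ Q := by linarith
  set B : ℝ := Q ^ p with hB
  have hB1 : (1:ℝ) ≤ B := one_le_pow₀ hQ1
  -- Summability of k ↦ B ^ (k / p) / (k / p)!
  haveI : NeZero p := ⟨by omega⟩
  have hsum : Summable (fun k : ℕ => B ^ (k / p) / (Nat.factorial (k / p))) := by
    have hF : Summable (fun nr : ℕ × Fin p => B ^ nr.1 / (Nat.factorial nr.1)) := by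
      rw [summable_prod_of_nonneg (by intro x; positivity)]
      constructor
      · intro x; exact (hasSum_fintype _).summable
      · have : (fun x : ℕ => ∑' _ : Fin p, B ^ x / (Nat.factorial x))
            = fun x : ℕ => (p:ℝ) * (B ^ x / (Nat.factorial x)) := by
          funext x
          rw [tsum_fintype]
          simp [Finset.sum_const, nsmul_eq_mul]
        rw [this]
        exact (Real.summable_pow_div_factorial B).mul_left _
    have := ((Nat.divModEquiv p).summable_iff
      (f := fun nr : ℕ × Fin p => B ^ nr.1 / (Nat.factorial nr.1))).mpr hF
    exact this
  refine Summable.of_nonneg_of_le (fun k => by positivity) (fun k => ?_) (hsum.mul_left B)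
  -- termwise bound
  have h1 : (k / p : ℕ) ≤ Nat.floor (δ * k) := by
    rw [Nat.le_floor_iff (by positivity)]
    calc ((k / p : ℕ) : ℝ) ≤ (k : ℝ) / p := Nat.cast_div_le
      _ ≤ δ * k := by
          rw [div_le_iff₀ hppos]
          calc (k:ℝ) = k * 1 := by ring
            _ ≤ k * (δ * p) := by
                exact mul_le_mul_of_nonneg_left hpδ (Nat.cast_nonneg k)
            _ = δ * k * p := by ring
  have h2 : R ^ k ≤ B * B ^ (k / p) := by
    calc R ^ k ≤ Q ^ k := pow_le_pow_left₀ hR (le_max_left _ _) k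
      _ ≤ Q ^ (p * (k / p) + p) := by
          refine pow_le_pow_right₀ hQ1 ?_
          have h := Nat.div_add_mod k p
          have h2 : k % p < p := Nat.mod_lt _ (by omega)
          omega
      _ = B * B ^ (k / p) := by
          rw [pow_add, pow_mul]; ring
  calc R ^ k / (Nat.floor (δ * k)).factorial
      ≤ (B * B ^ (k / p)) / (Nat.factorial (k / p)) := by
        refine div_le_div₀ (by positivity) h2 (by positivity) ?_
        exact_mod_cast Nat.factorial_le h1
      _ = B * (B ^ (k / p) / (Nat.factorial (k / p))) := by ring

lemma real_beta_integrand_eq {p q : ℝ} :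
    ∀ x ∈ uIcc (0:ℝ) 1,
      ((x:ℂ) ^ ((p:ℂ) - 1) * (1 - (x:ℂ)) ^ ((q:ℂ) - 1) : ℂ)
        = ((x ^ (p - 1) * (1 - x) ^ (q - 1) : ℝ) : ℂ) := by
  intro x hx
  rw [uIcc_of_le (by norm_num)] at hx
  obtain ⟨h0, h1⟩ := hx
  have e1 : ((x:ℂ) ^ ((p:ℂ) - 1)) = ((x ^ (p-1) : ℝ) : ℂ) := by
    rw [show ((p:ℂ) - 1) = ((p - 1 : ℝ) : ℂ) by push_cast; ring]
    exact (Complex.ofReal_cpow h0 _).symm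
  have e2 : ((1 - (x:ℂ)) ^ ((q:ℂ) - 1)) = (((1-x) ^ (q-1) : ℝ) : ℂ) := by
    rw [show ((1:ℂ) - (x:ℂ)) = (((1 - x : ℝ)) : ℂ) by push_cast; ring,
      show ((q:ℂ) - 1) = ((q - 1 : ℝ) : ℂ) by push_cast; ring]
    exact (Complex.ofReal_cpow (by linarith) _).symm
  rw [e1, e2]
  push_cast
  ring

lemma real_betaIntegrable {p q : ℝ} (hp : 0 < p) (hq : 0 < q) :
    IntervalIntegrable (fun x => x ^ (p-1) * (1-x) ^ (q-1)) volume 0 1 := by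
  have hc : IntervalIntegrable (fun x : ℝ =>
      ((x:ℂ) ^ ((p:ℂ) - 1) * (1 - (x:ℂ)) ^ ((q:ℂ) - 1) : ℂ)) volume 0 1 :=
    Complex.betaIntegral_convergent (by simpa using hp) (by simpa using hq)
  rw [intervalIntegrable_iff] at hc ⊢
  have hae : ∀ᵐ (x:ℝ) ∂(volume.restrict (uIoc (0:ℝ) 1)),
      ((x:ℂ) ^ ((p:ℂ) - 1) * (1 - (x:ℂ)) ^ ((q:ℂ) - 1) : ℂ)
        = ((x ^ (p - 1) * (1 - x) ^ (q - 1) : ℝ) : ℂ) := by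
    filter_upwards [self_mem_ae_restrict measurableSet_uIoc] with x hx
    exact real_beta_integrand_eq x (uIoc_subset_uIcc hx)
  have hc2 : IntegrableOn (fun x : ℝ =>
      ((x ^ (p - 1) * (1 - x) ^ (q - 1) : ℝ) : ℂ)) (uIoc (0:ℝ) 1) volume := hc.congr hae
  have := hc2.re
  simpa [IntegrableOn] using this

lemma real_beta {p q : ℝ} (hp : 0 < p) (hq : 0 < q) :
    ∫ x in (0:ℝ)..1, x ^ (p-1) * (1-x) ^ (q-1)
      = Real.Gamma p * Real.Gamma q / Real.Gamma (p+q) := by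
  have hG : Complex.Gamma p * Complex.Gamma q
      = Complex.Gamma (p+q) * Complex.betaIntegral p q :=
    Complex.Gamma_mul_Gamma_eq_betaIntegral
      (s := (p:ℂ)) (t := (q:ℂ)) (by simpa using hp) (by simpa using hq)
  have hcongr : Complex.betaIntegral p q
      = ((∫ x in (0:ℝ)..1, x ^ (p-1) * (1-x) ^ (q-1) : ℝ) : ℂ) := by
    rw [Complex.betaIntegral]
    rw [intervalIntegral.integral_congr (g := fun x : ℝ =>
      ((x ^ (p - 1) * (1 - x) ^ (q - 1) : ℝ) : ℂ)) real_beta_integrand_eq]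
    exact intervalIntegral.integral_ofReal
  rw [hcongr] at hG
  have hGpq : Real.Gamma (p+q) ≠ 0 := (Real.Gamma_pos_of_pos (by linarith)).ne'
  have := hG
  rw [Complex.Gamma_ofReal, Complex.Gamma_ofReal,
    show ((p:ℂ) + q) = ((p + q : ℝ) : ℂ) by push_cast; ring, Complex.Gamma_ofReal] at this
  have h2 : ((Real.Gamma p * Real.Gamma q : ℝ) : ℂ)
      = ((Real.Gamma (p+q) * ∫ x in (0:ℝ)..1, x ^ (p-1) * (1-x) ^ (q-1) : ℝ) : ℂ) := by
    push_cast
    exact this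
  have h3 := Complex.ofReal_injective h2
  field_simp
  linarith [h3]

lemma conv_power_integrable {p q t : ℝ} (hp : 0 < p) (hq : 0 < q) (ht : 0 < t) :
    IntervalIntegrable (fun τ => (t - τ) ^ (p-1) * τ ^ (q-1)) volume 0 t := by
  have h0 : IntervalIntegrable (fun x => x ^ (q-1) * (1-x) ^ (p-1)) volume 0 1 :=
    real_betaIntegrable hq hp
  have h1 : IntervalIntegrable (fun τ => (τ * t⁻¹) ^ (q-1) * (1 - τ * t⁻¹) ^ (p-1))
      volume 0 t := by
    have := h0.comp_mul_right (c := t⁻¹)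
    simpa [ht.ne', inv_inv] using this
  have h2 := h1.const_mul (t ^ (p-1) * t ^ (q-1))
  rw [intervalIntegrable_iff] at h2 ⊢
  refine h2.congr ?_
  filter_upwards [self_mem_ae_restrict measurableSet_uIoc] with τ hτ
  rw [uIoc_of_le ht.le] at hτ
  obtain ⟨hτ0, hτt⟩ := hτ
  have htτ : 0 ≤ t - τ := by linarith
  have e1 : (τ * t⁻¹) ^ (q-1) = τ ^ (q-1) * (t⁻¹) ^ (q-1) :=
    Real.mul_rpow hτ0.le (by positivity)
  have e2 : (1 - τ * t⁻¹) ^ (p-1) = (t - τ) ^ (p-1) * (t⁻¹) ^ (p-1) := by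
    rw [show (1 - τ * t⁻¹) = (t - τ) * t⁻¹ by field_simp, Real.mul_rpow htτ (by positivity)]
  rw [e1, e2, Real.inv_rpow ht.le, Real.inv_rpow ht.le]
  have g1 : t ^ (p-1) ≠ 0 := by positivity
  have g2 : t ^ (q-1) ≠ 0 := by positivity
  field_simp

lemma conv_power {p q t : ℝ} (hp : 0 < p) (hq : 0 < q) (ht : 0 < t) :
    ∫ τ in (0:ℝ)..t, (t - τ) ^ (p-1) * τ ^ (q-1)
      = Real.Gamma p * Real.Gamma q / Real.Gamma (p+q) * t ^ (p+q-1) := by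
  have key := integral_comp_mul_right (a := (0:ℝ)) (b := 1)
    (fun τ => (t - τ) ^ (p-1) * τ ^ (q-1)) ht.ne'
  simp only [zero_mul, one_mul, smul_eq_mul] at key
  -- key : ∫ x in 0..1, (t - x*t)^(p-1) * (x*t)^(q-1) = t⁻¹ * ∫ τ in 0..t, ...
  have lhs_eq : ∫ x in (0:ℝ)..1, (t - x * t) ^ (p-1) * (x * t) ^ (q-1)
      = t ^ (p-1) * t ^ (q-1) * (Real.Gamma q * Real.Gamma p / Real.Gamma (q+p)) := by
    rw [intervalIntegral.integral_congr (g := fun x =>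
        (t ^ (p-1) * t ^ (q-1)) * (x ^ (q-1) * (1-x) ^ (p-1))) ?_]
    · rw [intervalIntegral.integral_const_mul, real_beta hq hp]
    · intro x hx
      rw [uIcc_of_le (by norm_num)] at hx
      obtain ⟨h0, h1⟩ := hx
      have e1 : (t - x * t) ^ (p-1) = t ^ (p-1) * (1-x) ^ (p-1) := by
        rw [show t - x * t = t * (1 - x) by ring, Real.mul_rpow ht.le (by linarith)]
      have e2 : (x * t) ^ (q-1) = x ^ (q-1) * t ^ (q-1) := Real.mul_rpow h0 ht.le
      simp only []
      rw [e1, e2]; ring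
  rw [lhs_eq] at key
  have : (∫ τ in (0:ℝ)..t, (t - τ) ^ (p-1) * τ ^ (q-1))
      = t * (t ^ (p-1) * t ^ (q-1) * (Real.Gamma q * Real.Gamma p / Real.Gamma (q+p))) := by
    have h2 : ∫ (x : ℝ) in (0:ℝ)..t, (t - x) ^ (p - 1) * x ^ (q - 1)
        = t * (t ^ (p-1) * t ^ (q-1) * (Real.Gamma q * Real.Gamma p / Real.Gamma (q+p))) := by
      rw [eq_comm, inv_mul_eq_iff_eq_mul₀ ht.ne'] at key
      exact key
    exact h2
  rw [this]
  have : t * (t ^ (p-1) * t ^ (q-1)) = t ^ (p+q-1) := by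
    nth_rewrite 1 [← Real.rpow_one t]
    rw [← Real.rpow_add ht, ← Real.rpow_add ht]
    ring_nf
  rw [show q + p = p + q by ring]
  calc t * (t ^ (p-1) * t ^ (q-1) * (Real.Gamma q * Real.Gamma p / Real.Gamma (p+q)))
      = t * (t ^ (p-1) * t ^ (q-1)) * (Real.Gamma q * Real.Gamma p / Real.Gamma (p+q)) := by ring
    _ = Real.Gamma p * Real.Gamma q / Real.Gamma (p+q) * t ^ (p+q-1) := by rw [this]; ring

theorem stmt_14 (m : ℕ) (hm : 2 ≤ m) (α : Fin m → ℝ)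
    (hpos : ∀ j, 0 < α j) (hanti : StrictAnti α) (hα1 : α ⟨0, by omega⟩ < 1)
    (k l : ℝ → ℝ)
    (hk : ∀ t : ℝ, k t = ∑ j, g (1 - α j) t)
    (hl : ∀ t : ℝ, l t = t ^ (α ⟨0, by omega⟩ - 1) *
      mvMittagLeffler (m - 1)
        (fun i => α ⟨0, by omega⟩ - α (Fin.cast (by omega) i.succ))
        (α ⟨0, by omega⟩)
        (fun i => -(t ^ (α ⟨0, by omega⟩ - α (Fin.cast (by omega) i.succ))))) :
    ∀ t ∈ Ioi (0:ℝ), lconv k l t = 1 := by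
  intro t ht
  rw [mem_Ioi] at ht
  have hm0 : 0 < m := by omega
  have hmn : m - 1 + 1 = m := by omega
  set a0 : ℝ := α ⟨0, hm0⟩ with ha0
  set idx : Fin (m-1) → Fin m := fun i => Fin.cast hmn i.succ with hidx
  set δ : Fin (m-1) → ℝ := fun i => a0 - α (idx i) with hδdef
  have hl' : ∀ τ : ℝ, l τ = τ ^ (a0 - 1) * mvMittagLeffler (m-1) δ a0
      (fun i => -(τ ^ δ i)) := by
    intro τ
    rw [hl τ, ha0, hδdef, hidx]
  set s : (Fin (m-1) → ℕ) → ℝ := fun v => ∑ j, δ j * (v j : ℝ) with hsdef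
  set W : (Fin (m-1) → ℕ) → ℝ := fun v => (Nat.multinomial Finset.univ v : ℝ) with hWdef
  set A : ℕ → Finset (Fin (m-1) → ℕ) := fun kk => Finset.Nat.antidiagonalTuple (m-1) kk
    with hAdef
  have hne : (Finset.univ : Finset (Fin (m-1))).Nonempty :=
    ⟨⟨0, by omega⟩, Finset.mem_univ _⟩
  have ha0pos : 0 < a0 := by rw [ha0]; exact hpos _
  have ha0lt : a0 < 1 := by rw [ha0]; exact hα1
  have hαle : ∀ j : Fin m, α j ≤ a0 := by
    intro j
    rw [ha0]
    exact hanti.antitone (by simp [Fin.le_def])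
  have hδpos : ∀ i, 0 < δ i := by
    intro i
    rw [hδdef, ha0]
    have hlt : (⟨0, hm0⟩ : Fin m) < idx i := by
      rw [hidx]
      simp [Fin.lt_def]
    exact sub_pos.mpr (hanti hlt)
  have h1αpos : ∀ j : Fin m, 0 < 1 - α j := fun j => by
    have := hαle j; linarith
  have hs0 : ∀ v, 0 ≤ s v := by
    intro v
    rw [hsdef]
    exact Finset.sum_nonneg fun j _ => mul_nonneg (hδpos j).le (Nat.cast_nonneg _)
  have hW0 : ∀ v, 0 ≤ W v := fun v => by rw [hWdef]; positivity
  have hmem : ∀ {kk : ℕ} {v : Fin (m-1) → ℕ}, v ∈ A kk ↔ ∑ j, v j = kk := by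
    intro kk v
    rw [hAdef]
    exact Finset.Nat.mem_antidiagonalTuple
  have hWeq : ∀ (kk : ℕ) (v : Fin (m-1) → ℕ), v ∈ A kk →
      ((kk.factorial : ℝ) / ∏ j, ((v j).factorial : ℝ)) = W v := by
    intro kk v hv
    have h := Wr_eq v
    rw [hmem.mp hv] at h
    exact h
  set δm : ℝ := Finset.univ.inf' hne δ with hδm
  have hδmpos : 0 < δm := by
    rw [hδm]
    exact (Finset.lt_inf'_iff hne).mpr (fun i _ => hδpos i)
  have hδmle : ∀ i, δm ≤ δ i := fun i => Finset.inf'_le δ (Finset.mem_univ i)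
  have hsv_ge : ∀ (kk : ℕ) (v : Fin (m-1) → ℕ), v ∈ A kk → δm * kk ≤ s v := by
    intro kk v hv
    have hsumv : ∑ j, v j = kk := hmem.mp hv
    calc δm * kk = ∑ j, δm * (v j : ℝ) := by
          rw [← Finset.mul_sum]
          congr 1
          exact_mod_cast hsumv.symm
      _ ≤ s v := Finset.sum_le_sum (fun j _ =>
          mul_le_mul_of_nonneg_right (hδmle j) (Nat.cast_nonneg _))
  set R : ℝ := ∑ i, t ^ δ i with hR
  have hR0 : 0 ≤ R := by
    rw [hR]
    exact Finset.sum_nonneg fun i _ => (Real.rpow_pos_of_pos ht _).le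
  have hprod_t : ∀ (x : ℝ), 0 < x → ∀ (v : Fin (m-1) → ℕ),
      ∏ i, (x ^ δ i) ^ (v i) = x ^ (s v) := by
    intro x hx v
    rw [hsdef]
    rw [Real.rpow_sum_of_pos hx]
    refine Finset.prod_congr rfl (fun i _ => ?_)
    rw [Real.rpow_mul hx.le, Real.rpow_natCast]
  have hMT : ∀ kk : ℕ, ∑ v ∈ A kk, W v * t ^ (s v) = R ^ kk := by
    intro kk
    rw [hR, ← multinomial_thm kk (fun i => t ^ δ i)]
    exact Finset.sum_congr rfl (fun v _ => by rw [hprod_t t ht v])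
  set u : ℕ → ℝ := fun kk => R ^ kk / (Nat.floor (δm * kk)).factorial with hu
  have husum : Summable u := summable_geo_div_floor R hR0 hδmpos
  have hu0 : ∀ kk, 0 ≤ u kk := fun kk => by rw [hu]; positivity
  have hVbound : ∀ (c : ℝ), 1 ≤ c → ∀ kk : ℕ,
      ∑ v ∈ A kk, W v * (t ^ (c + s v - 1) / Real.Gamma (c + s v))
        ≤ (t ^ (c - 1) * Real.exp 1) * u kk := by
    intro c hc kk
    have key : ∀ v ∈ A kk, W v * (t ^ (c + s v - 1) / Real.Gamma (c + s v))
        ≤ (t ^ (c-1) * Real.exp 1 / (Nat.floor (δm * kk)).factorial) * (W v * t ^ (s v)) := by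
      intro v hv
      have h1 : t ^ (c + s v - 1) = t ^ (c - 1) * t ^ (s v) := by
        rw [← Real.rpow_add ht]
        ring_nf
      have hfle : ((Nat.floor (δm * kk)).factorial : ℝ) ≤ ((Nat.floor (s v)).factorial : ℝ) := by
        exact_mod_cast Nat.factorial_le (Nat.floor_le_floor (hsv_ge kk v hv))
      have hG : Real.exp (-1) * ((Nat.floor (δm * kk)).factorial : ℝ)
          ≤ Real.Gamma (c + s v) := by
        refine le_trans ?_ (Gamma_floor_lower hc (hs0 v))
        exact mul_le_mul_of_nonneg_left hfle (Real.exp_pos _).le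
      have hGpos : 0 < Real.Gamma (c + s v) :=
        Real.Gamma_pos_of_pos (by have := hs0 v; linarith)
      have hFpos : (0:ℝ) < ((Nat.floor (δm * kk)).factorial : ℝ) := by positivity
      have hinv : 1 / Real.Gamma (c + s v)
          ≤ Real.exp 1 / ((Nat.floor (δm * kk)).factorial : ℝ) := by
        rw [div_le_div_iff₀ hGpos hFpos]
        have hexp : Real.exp (-1) * Real.exp 1 = 1 := by
          rw [← Real.exp_add]; norm_num
        nlinarith [Real.exp_pos 1]
      have htpos : (0:ℝ) ≤ t ^ (c-1) * t ^ (s v) * W v := by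
        have := hW0 v
        positivity
      calc W v * (t ^ (c + s v - 1) / Real.Gamma (c + s v))
          = (t ^ (c-1) * t ^ (s v) * W v) * (1 / Real.Gamma (c + s v)) := by
            rw [h1]; ring
        _ ≤ (t ^ (c-1) * t ^ (s v) * W v) * (Real.exp 1 / ((Nat.floor (δm * kk)).factorial : ℝ)) :=
            mul_le_mul_of_nonneg_left hinv htpos
        _ = (t ^ (c-1) * Real.exp 1 / (Nat.floor (δm * kk)).factorial) * (W v * t ^ (s v)) := by
            ring
    calc ∑ v ∈ A kk, W v * (t ^ (c + s v - 1) / Real.Gamma (c + s v))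
        ≤ ∑ v ∈ A kk, (t ^ (c-1) * Real.exp 1 / (Nat.floor (δm * kk)).factorial)
            * (W v * t ^ (s v)) := Finset.sum_le_sum key
      _ = (t ^ (c-1) * Real.exp 1 / (Nat.floor (δm * kk)).factorial)
            * ∑ v ∈ A kk, W v * t ^ (s v) := by rw [← Finset.mul_sum]
      _ = (t ^ (c - 1) * Real.exp 1) * u kk := by rw [hMT kk, hu]; ring
  set B : Fin m → ℝ := fun j => 1 - α j + a0 with hBdef
  have hB1 : ∀ j, 1 ≤ B j := by
    intro j
    rw [hBdef]
    have := hαle j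
    simp only []
    linarith
  set V : Fin m → ℕ → ℝ := fun j kk =>
    ∑ v ∈ A kk, W v * (t ^ (B j + s v - 1) / Real.Gamma (B j + s v)) with hVdef
  set S : ℕ → ℝ := fun kk =>
    ∑ v ∈ A kk, W v * (t ^ (1 + s v - 1) / Real.Gamma (1 + s v)) with hSdef
  have hS0 : ∀ kk, 0 ≤ S kk := by
    intro kk
    rw [hSdef]
    refine Finset.sum_nonneg fun v _ => ?_
    have h1 : 0 < Real.Gamma (1 + s v) := Real.Gamma_pos_of_pos (by have := hs0 v; linarith)
    have h2 : (0:ℝ) ≤ t ^ (1 + s v - 1) := (Real.rpow_pos_of_pos ht _).le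
    exact mul_nonneg (hW0 v) (div_nonneg h2 h1.le)
  have hSle : ∀ kk, S kk ≤ (t ^ ((1:ℝ) - 1) * Real.exp 1) * u kk := fun kk =>
    hVbound 1 le_rfl kk
  have hSsum : Summable S :=
    Summable.of_nonneg_of_le hS0 hSle ((husum.mul_left _))
  have hsplit : ∀ kk : ℕ, ∑ j : Fin m, V j kk = S kk + S (kk + 1) := by
    intro kk
    have e0 : ∑ j : Fin m, V j kk
        = V ⟨0, hm0⟩ kk + ∑ i : Fin (m-1), V (idx i) kk := by
      rw [← Fintype.sum_equiv (finCongr hmn) (fun j' => V (finCongr hmn j') kk)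
        (fun j => V j kk) (fun x => rfl)]
      rw [Fin.sum_univ_succ]
      rfl
    have hB0 : B ⟨0, hm0⟩ = 1 := by
      simp only [hBdef]
      rw [ha0]
      ring
    have eV0 : V ⟨0, hm0⟩ kk = S kk := by
      have : V ⟨0, hm0⟩ kk
          = ∑ v ∈ A kk, W v * (t ^ (B ⟨0, hm0⟩ + s v - 1) / Real.Gamma (B ⟨0, hm0⟩ + s v)) :=
        rfl
      rw [this]
      refine Finset.sum_congr rfl (fun v _ => ?_)
      rw [hB0]
    have hupd : ∀ (v : Fin (m-1) → ℕ) (i : Fin (m-1)),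
        s (Function.update v i (v i + 1)) = s v + δ i := by
      intro v i
      rw [hsdef]
      simp only []
      have h1 : (fun j => δ j * ((Function.update v i (v i + 1) j : ℕ) : ℝ))
          = Function.update (fun j => δ j * ((v j : ℕ) : ℝ)) i (δ i * ((v i : ℕ) + 1)) := by
        funext j
        by_cases hji : j = i
        · subst hji; simp
        · simp [Function.update_of_ne hji]
      rw [show (∑ j, δ j * ((Function.update v i (v i + 1) j : ℕ) : ℝ))
          = ∑ j, (fun j => δ j * ((Function.update v i (v i + 1) j : ℕ) : ℝ)) j from rfl, h1]
      rw [Finset.sum_update_of_mem (Finset.mem_univ i), ← Finset.erase_eq,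
        ← Finset.add_sum_erase Finset.univ (fun j => δ j * ((v j : ℕ) : ℝ)) (Finset.mem_univ i)]
      ring
    have eVi : ∑ i : Fin (m-1), V (idx i) kk = S (kk + 1) := by
      have hkr := key_rec (n := m-1) kk
        (fun v => t ^ (1 + s v - 1) / Real.Gamma (1 + s v))
      have hSkk : S (kk+1) = ∑ l' ∈ Finset.Nat.antidiagonalTuple (m-1) (kk+1),
          (Nat.multinomial Finset.univ l' : ℝ) * (t ^ (1 + s l' - 1) / Real.Gamma (1 + s l')) :=
        rfl
      rw [hSkk, ← hkr]
      refine Finset.sum_congr rfl (fun i _ => ?_)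
      show ∑ v ∈ Finset.Nat.antidiagonalTuple (m-1) kk,
          (Nat.multinomial Finset.univ v : ℝ)
            * (t ^ (B (idx i) + s v - 1) / Real.Gamma (B (idx i) + s v)) = _
      refine Finset.sum_congr rfl (fun v hv => ?_)
      have hBi : B (idx i) = 1 + δ i := by
        rw [hBdef, hδdef]
        simp only []
        ring
      have h1 : B (idx i) + s v - 1 = 1 + s (Function.update v i (v i + 1)) - 1 := by
        rw [hupd v i, hBi]; ring
      have h2 : B (idx i) + s v = 1 + s (Function.update v i (v i + 1)) := by
        rw [hupd v i, hBi]; ring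
      rw [h1, h2]
    rw [e0, eV0, eVi]
  have hS0val : S 0 = 1 := by
    rw [hSdef, hAdef]
    simp only []
    rw [Finset.Nat.antidiagonalTuple_zero_right]
    rw [Finset.sum_singleton]
    have h1 : s 0 = 0 := by
      rw [hsdef]; simp
    have h2 : W 0 = 1 := by
      rw [hWdef]
      have := Nat.multinomial_spec (Finset.univ : Finset (Fin (m-1))) (0 : Fin (m-1) → ℕ)
      simp at this
      simp [this]
    rw [h1, h2]
    norm_num [Real.Gamma_one]
  -- telescoping
  have habs : ∀ (f : ℕ → ℝ), (∀ kk, 0 ≤ f kk) → Summable f →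
      Summable (fun kk => (-1:ℝ)^kk * f kk) := by
    intro f hf hsf
    refine Summable.of_abs (hsf.congr fun kk => ?_)
    rw [abs_mul, abs_pow, abs_neg, abs_one, one_pow, one_mul, abs_of_nonneg (hf kk)]
  have hSsum' : Summable (fun kk => S (kk + 1)) := (summable_nat_add_iff 1).mpr hSsum
  have hS0' : ∀ kk, 0 ≤ S (kk + 1) := fun kk => hS0 _
  have h1 : Summable (fun kk => (-1:ℝ)^kk * S kk) := habs S hS0 hSsum
  have h2 : Summable (fun kk => (-1:ℝ)^kk * S (kk + 1)) := habs _ hS0' hSsum'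
  have htel : ∑' kk : ℕ, ((-1:ℝ)^kk * (S kk + S (kk + 1))) = 1 := by
    have e1 : ∑' kk : ℕ, ((-1:ℝ)^kk * (S kk + S (kk + 1)))
        = (∑' kk : ℕ, (-1:ℝ)^kk * S kk) + ∑' kk : ℕ, (-1:ℝ)^kk * S (kk + 1) := by
      rw [← Summable.tsum_add h1 h2]
      exact tsum_congr fun kk => by ring
    have e2 : ∑' kk : ℕ, (-1:ℝ)^kk * S (kk + 1)
        = - ∑' kk : ℕ, (-1:ℝ)^(kk+1) * S (kk + 1) := by
      rw [← tsum_neg]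
      exact tsum_congr fun kk => by ring_nf
    have e3 : ∑' kk : ℕ, (-1:ℝ)^kk * S kk
        = S 0 + ∑' kk : ℕ, (-1:ℝ)^(kk+1) * S (kk + 1) := by
      have := Summable.tsum_eq_zero_add h1
      simpa using this
    rw [e1, e2, e3, hS0val]
    ring
  -- series representation of l
  have hlrep : ∀ τ : ℝ, 0 < τ → l τ = ∑' kk : ℕ,
      ((-1:ℝ)^kk * ∑ v ∈ A kk, W v * (τ ^ (a0 + s v - 1) / Real.Gamma (a0 + s v))) := by
    intro τ hτ
    rw [hl' τ]
    simp only [mvMittagLeffler]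
    rw [← tsum_mul_left]
    refine tsum_congr (fun kk => ?_)
    rw [Finset.mul_sum, Finset.mul_sum]
    refine Finset.sum_congr rfl (fun v hv => ?_)
    have hsv : (∑ j, δ j * ((v j : ℕ) : ℝ)) = s v := rfl
    have e1 : ∏ j, (-(τ ^ δ j)) ^ (v j) = (-1:ℝ)^kk * τ ^ (s v) := by
      have h3 : ∀ j : Fin (m-1), (-(τ ^ δ j)) ^ (v j)
          = (-1:ℝ)^(v j) * (τ ^ δ j) ^ (v j) := fun j => by rw [neg_pow]
      rw [Finset.prod_congr rfl (fun j _ => h3 j), Finset.prod_mul_distrib,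
        Finset.prod_pow_eq_pow_sum, hmem.mp hv, hprod_t τ hτ v]
    have e3 : τ ^ (a0 + s v - 1) = τ ^ (a0 - 1) * τ ^ (s v) := by
      rw [← Real.rpow_add hτ]; ring_nf
    rw [hsv, hWeq kk v hv, e1, e3]
    ring
  set P : ℕ → ℝ → ℝ := fun kk τ => ∑ j : Fin m, ∑ v ∈ A kk,
    (W v / (Real.Gamma (1 - α j) * Real.Gamma (a0 + s v)))
      * ((t - τ) ^ (1 - α j - 1) * τ ^ (a0 + s v - 1)) with hPdef
  have hΓ1 : ∀ j : Fin m, (0:ℝ) < Real.Gamma (1 - α j) :=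
    fun j => Real.Gamma_pos_of_pos (h1αpos j)
  have hΓ2 : ∀ v, (0:ℝ) < Real.Gamma (a0 + s v) :=
    fun v => Real.Gamma_pos_of_pos (by have := hs0 v; linarith)
  have hq0 : ∀ v, (0:ℝ) < a0 + s v := fun v => by have := hs0 v; linarith
  have hH : ∀ kk : ℕ, ∀ τ ∈ Ioc (0:ℝ) t,
      k (t - τ) * ((-1:ℝ)^kk * ∑ v ∈ A kk, W v * (τ ^ (a0 + s v - 1) / Real.Gamma (a0 + s v)))
        = (-1:ℝ)^kk * P kk τ := by
    intro kk τ hτ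
    rw [hk (t - τ)]
    have h0 : (∑ j, g (1 - α j) (t - τ))
        * ((-1:ℝ)^kk * ∑ v ∈ A kk, W v * (τ ^ (a0 + s v - 1) / Real.Gamma (a0 + s v)))
        = (-1:ℝ)^kk * ((∑ j, g (1 - α j) (t - τ))
          * ∑ v ∈ A kk, W v * (τ ^ (a0 + s v - 1) / Real.Gamma (a0 + s v))) := by ring
    rw [h0, Finset.sum_mul_sum]
    congr 1
    refine Finset.sum_congr rfl (fun j _ => Finset.sum_congr rfl (fun v _ => ?_))
    simp only [g]
    have g1 : Real.Gamma (1 - α j) ≠ 0 := (hΓ1 j).ne'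
    have g2 : Real.Gamma (a0 + s v) ≠ 0 := (hΓ2 v).ne'
    field_simp
  have hint : ∀ (j : Fin m) (v : Fin (m-1) → ℕ),
      IntegrableOn (fun τ => (t - τ) ^ (1 - α j - 1) * τ ^ (a0 + s v - 1)) (Ioc 0 t) volume := by
    intro j v
    exact (intervalIntegrable_iff_integrableOn_Ioc_of_le ht.le).mp
      (conv_power_integrable (h1αpos j) (hq0 v) ht)
  have hPint : ∀ kk, IntegrableOn (P kk) (Ioc 0 t) volume := by
    intro kk
    refine integrable_finset_sum _ (fun j _ => integrable_finset_sum _ (fun v _ => ?_))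
    exact (hint j v).const_mul _
  have hP0' : ∀ kk : ℕ, ∀ τ ∈ Ioc (0:ℝ) t, 0 ≤ P kk τ := by
    intro kk τ hτ
    obtain ⟨hτ0, hτt⟩ := hτ
    refine Finset.sum_nonneg fun j _ => Finset.sum_nonneg fun v _ => ?_
    have h1 : (0:ℝ) ≤ (t - τ) ^ (1 - α j - 1) := Real.rpow_nonneg (by linarith) _
    have h2 : (0:ℝ) ≤ τ ^ (a0 + s v - 1) := (Real.rpow_pos_of_pos hτ0 _).le
    exact mul_nonneg (div_nonneg (hW0 v) (mul_pos (hΓ1 j) (hΓ2 v)).le)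
      (mul_nonneg h1 h2)
  have hPval : ∀ kk, ∫ τ in Ioc (0:ℝ) t, P kk τ = ∑ j : Fin m, V j kk := by
    intro kk
    rw [integral_finset_sum _ (fun j _ =>
      integrable_finset_sum _ (fun v _ => (hint j v).const_mul _))]
    refine Finset.sum_congr rfl (fun j _ => ?_)
    rw [integral_finset_sum _ (fun v _ => (hint j v).const_mul _)]
    have hVj : V j kk = ∑ v ∈ A kk, W v * (t ^ (B j + s v - 1) / Real.Gamma (B j + s v)) := rfl
    rw [hVj]
    refine Finset.sum_congr rfl (fun v _ => ?_)
    rw [MeasureTheory.integral_const_mul, ← intervalIntegral.integral_of_le ht.le,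
      conv_power (h1αpos j) (hq0 v) ht]
    have hBj : (1 - α j) + (a0 + s v) = B j + s v := by
      simp only [hBdef]; ring
    rw [hBj]
    have g1 : Real.Gamma (1 - α j) ≠ 0 := (hΓ1 j).ne'
    have g2 : Real.Gamma (a0 + s v) ≠ 0 := (hΓ2 v).ne'
    have g3 : Real.Gamma (B j + s v) ≠ 0 :=
      (Real.Gamma_pos_of_pos (by have := hB1 j; have := hs0 v; linarith)).ne'
    field_simp
  have hPmeas : ∀ kk, AEStronglyMeasurable (fun τ => (-1:ℝ)^kk * P kk τ)
      (volume.restrict (Ioc 0 t)) := by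
    intro kk
    refine (Measurable.const_mul ?_ _).aestronglyMeasurable
    refine Finset.measurable_sum _ (fun j _ => Finset.measurable_sum _ (fun v _ => ?_))
    refine Measurable.const_mul ?_ _
    apply Measurable.mul
    · fun_prop
    · fun_prop
  set C : ℝ := ∑ j : Fin m, t ^ (B j - 1) * Real.exp 1 with hC
  have hVle : ∀ (j : Fin m) (kk : ℕ), V j kk ≤ (t ^ (B j - 1) * Real.exp 1) * u kk :=
    fun j kk => hVbound (B j) (hB1 j) kk
  have hPsumle : ∀ kk, ∫ τ in Ioc (0:ℝ) t, P kk τ ≤ C * u kk := by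
    intro kk
    rw [hPval kk, hC, Finset.sum_mul]
    exact Finset.sum_le_sum fun j _ => hVle j kk
  have hC0 : 0 ≤ C := by
    rw [hC]
    exact Finset.sum_nonneg fun j _ =>
      mul_nonneg (Real.rpow_pos_of_pos ht _).le (Real.exp_pos _).le
  have hlintegral : ∑' kk : ℕ, ∫⁻ τ, ‖((-1:ℝ)^kk * P kk τ)‖₊
      ∂(volume.restrict (Ioc 0 t)) ≠ ⊤ := by
    refine ne_top_of_le_ne_top (b := ENNReal.ofReal (∑' kk : ℕ, C * u kk))
      ENNReal.ofReal_ne_top ?_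
    have hnn : ∀ kk : ℕ, (∫⁻ τ, ‖((-1:ℝ)^kk * P kk τ)‖₊ ∂(volume.restrict (Ioc 0 t)))
        = ENNReal.ofReal (∫ τ in Ioc (0:ℝ) t, P kk τ) := by
      intro kk
      rw [ofReal_integral_eq_lintegral_ofReal (hPint kk) ?_]
      · refine lintegral_congr_ae ?_
        filter_upwards [self_mem_ae_restrict measurableSet_Ioc] with τ hτ
        rw [← Real.enorm_eq_ofReal (hP0' kk τ hτ)]
        congr 1
        rw [nnnorm_mul]
        simp
      · filter_upwards [self_mem_ae_restrict measurableSet_Ioc] with τ hτ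
        exact hP0' kk τ hτ
    calc ∑' kk : ℕ, ∫⁻ τ, ‖((-1:ℝ)^kk * P kk τ)‖₊ ∂(volume.restrict (Ioc 0 t))
        = ∑' kk : ℕ, ENNReal.ofReal (∫ τ in Ioc (0:ℝ) t, P kk τ) := by
          exact tsum_congr hnn
      _ ≤ ∑' kk : ℕ, ENNReal.ofReal (C * u kk) :=
          ENNReal.tsum_le_tsum fun kk => ENNReal.ofReal_le_ofReal (hPsumle kk)
      _ = ENNReal.ofReal (∑' kk : ℕ, C * u kk) :=
          (ENNReal.ofReal_tsum_of_nonneg (fun kk => mul_nonneg hC0 (hu0 kk))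
            (husum.mul_left C)).symm
  have hchain : lconv k l t = ∑' kk : ℕ, ((-1:ℝ)^kk * (S kk + S (kk + 1))) := by
    have h1 : lconv k l t = ∫ τ in Ioc (0:ℝ) t, k (t - τ) * l τ := by
      simp only [lconv]
      exact intervalIntegral.integral_of_le ht.le
    have h2 : ∫ τ in Ioc (0:ℝ) t, k (t - τ) * l τ
        = ∫ τ in Ioc (0:ℝ) t, ∑' kk : ℕ, ((-1:ℝ)^kk * P kk τ) := by
      refine setIntegral_congr_fun measurableSet_Ioc (fun τ hτ => ?_)
      rw [hlrep τ hτ.1, ← tsum_mul_left]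
      exact tsum_congr fun kk => hH kk τ hτ
    have h3 : ∫ τ in Ioc (0:ℝ) t, ∑' kk : ℕ, ((-1:ℝ)^kk * P kk τ)
        = ∑' kk : ℕ, ∫ τ in Ioc (0:ℝ) t, ((-1:ℝ)^kk * P kk τ) :=
      integral_tsum hPmeas hlintegral
    rw [h1, h2, h3]
    refine tsum_congr fun kk => ?_
    rw [MeasureTheory.integral_const_mul, hPval kk, hsplit kk]
  rw [hchain, htel]
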